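/- arXiv:2309.05616 — 2 statements merged into one kernel-verified Lean document; each statement's English description precedes it below -/
import Mathlib

section
/- For every real ν and every real q with q ≠ 0, setting λ = −1/2 + iν (so that Γ(1+λ−iq)·Γ(−λ−iq) = G(q,ν) and Γ(1+λ+iq)·Γ(−λ+iq) = G(−q,ν)), the following identity holds: π/(Γ(1−iq)·Γ(1+iq)) + sin²(πλ)·Γ(iq)·Γ(−iq)/π + π·Γ(iq)·Γ(−iq)/(G(q,ν)·G(−q,ν)) = (cosh(2πq) + cosh(2πν))/(q·sinh(πq)). -/
open Complex

/-- `G(q,ν) = Γ(1/2 - iν - iq)·Γ(1/2 + iν - iq)`. -/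
noncomputable def Gfun (q ν : ℝ) : ℂ :=
  Complex.Gamma (1 / 2 - Complex.I * ν - Complex.I * q) *
    Complex.Gamma (1 / 2 + Complex.I * ν - Complex.I * q)

/-- For real `ν` and real `q ≠ 0`, with conical degree `λ = -1/2 + iν`:
`π/(Γ(1-iq)Γ(1+iq)) + sin²(πλ)Γ(iq)Γ(-iq)/π + πΓ(iq)Γ(-iq)/(G(q,ν)G(-q,ν))
  = (cosh(2πq)+cosh(2πν))/(q·sinh(πq))`. -/
theorem bielski_coefficient_conical (ν q : ℝ) (hq : q ≠ 0) :
    (Real.pi : ℂ) / (Complex.Gamma (1 - Complex.I * q) * Complex.Gamma (1 + Complex.I * q))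
      + Complex.sin ((Real.pi : ℂ) * (-(1 / 2) + Complex.I * ν)) ^ 2
          * Complex.Gamma (Complex.I * q) * Complex.Gamma (-(Complex.I * q)) / (Real.pi : ℂ)
      + (Real.pi : ℂ) * Complex.Gamma (Complex.I * q) * Complex.Gamma (-(Complex.I * q))
          / (Gfun q ν * Gfun (-q) ν)
      = ((Real.cosh (2 * Real.pi * q) : ℂ) + (Real.cosh (2 * Real.pi * ν) : ℂ))
          / ((q : ℂ) * (Real.sinh (Real.pi * q) : ℂ)) := by
  have hqC : (q : ℂ) ≠ 0 := by exact_mod_cast hq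
  have hiq : Complex.I * q ≠ 0 := by simp [Complex.I_ne_zero, hqC]
  have hpi : (Real.pi : ℂ) ≠ 0 := by exact_mod_cast Real.pi_ne_zero
  have hS : (Real.sinh (Real.pi * q) : ℂ) ≠ 0 := by
    exact_mod_cast (by simp [Real.sinh_eq_zero, Real.pi_ne_zero, hq] :
      Real.sinh (Real.pi * q) ≠ 0)
  have hc1 : (Real.cosh (Real.pi * (ν + q)) : ℂ) ≠ 0 := by
    exact_mod_cast (Real.cosh_pos _).ne'
  have hc2 : (Real.cosh (Real.pi * (ν - q)) : ℂ) ≠ 0 := by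
    exact_mod_cast (Real.cosh_pos _).ne'
  -- sin(π·iq) = sinh(πq)·i
  have hsiniq : Complex.sin ((Real.pi : ℂ) * (Complex.I * q))
      = (Real.sinh (Real.pi * q) : ℂ) * Complex.I := by
    rw [show (Real.pi : ℂ) * (Complex.I * q) = ((Real.pi * q : ℝ) : ℂ) * Complex.I by
      push_cast; ring, Complex.sin_mul_I, Complex.ofReal_sinh]
  have hrefl := Complex.Gamma_mul_Gamma_one_sub (Complex.I * q)
  rw [hsiniq] at hrefl
  have h1 : Complex.Gamma (1 - Complex.I * q)
      = -(Complex.I * q) * Complex.Gamma (-(Complex.I * q)) := by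
    have := Complex.Gamma_add_one (-(Complex.I * q)) (neg_ne_zero.mpr hiq)
    rw [show -(Complex.I * ↑q) + 1 = 1 - Complex.I * q by ring] at this
    exact this
  have h2 : Complex.Gamma (1 + Complex.I * q)
      = (Complex.I * q) * Complex.Gamma (Complex.I * q) := by
    have := Complex.Gamma_add_one (Complex.I * q) hiq
    rw [show Complex.I * ↑q + 1 = 1 + Complex.I * q by ring] at this
    exact this
  have hAB : Complex.Gamma (Complex.I * q) * Complex.Gamma (-(Complex.I * q))
      = (Real.pi : ℂ) / ((q : ℂ) * (Real.sinh (Real.pi * q) : ℂ)) := by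
    have h3 : -(Complex.I * q) * (Complex.Gamma (Complex.I * q)
        * Complex.Gamma (-(Complex.I * q)))
        = (Real.pi : ℂ) / ((Real.sinh (Real.pi * q) : ℂ) * Complex.I) := by
      rw [← hrefl, h1]; ring
    rw [eq_div_iff (mul_ne_zero hS Complex.I_ne_zero)] at h3
    rw [eq_div_iff (mul_ne_zero hqC hS)]
    linear_combination h3 + ((q : ℂ) * (Real.sinh (Real.pi * q) : ℂ)
      * Complex.Gamma (Complex.I * q) * Complex.Gamma (-(Complex.I * q))) * Complex.I_sq
  have hD : Complex.Gamma (1 - Complex.I * q) * Complex.Gamma (1 + Complex.I * q)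
      = (q : ℂ) * (Real.pi : ℂ) / (Real.sinh (Real.pi * q) : ℂ) := by
    rw [h1, h2, eq_div_iff hS]
    have hAB' : Complex.Gamma (Complex.I * q) * Complex.Gamma (-(Complex.I * q))
        * ((q : ℂ) * (Real.sinh (Real.pi * q) : ℂ)) = (Real.pi : ℂ) := by
      rw [hAB]; exact div_mul_cancel₀ _ (mul_ne_zero hqC hS)
    linear_combination (q : ℂ) * hAB' - ((q : ℂ) ^ 2 * Complex.Gamma (Complex.I * q)
      * Complex.Gamma (-(Complex.I * q)) * (Real.sinh (Real.pi * q) : ℂ)) * Complex.I_sq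
  have hsin2 : Complex.sin ((Real.pi : ℂ) * (-(1 / 2) + Complex.I * ν)) ^ 2
      = ((Real.cosh (Real.pi * ν) : ℂ)) ^ 2 := by
    rw [show (Real.pi : ℂ) * (-(1 / 2) + Complex.I * ν)
        = -((Real.pi : ℂ) / 2) + ((Real.pi * ν : ℝ) : ℂ) * Complex.I by push_cast; ring,
      Complex.sin_add, Complex.sin_neg, Complex.cos_neg, Complex.sin_pi_div_two,
      Complex.cos_pi_div_two, Complex.cos_mul_I, Complex.ofReal_cosh]
    ring
  have hhalf : ∀ x : ℝ, Complex.Gamma (1 / 2 + ((x : ℂ)) * Complex.I)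
      * Complex.Gamma (1 / 2 - ((x : ℂ)) * Complex.I)
      = (Real.pi : ℂ) / (Real.cosh (Real.pi * x) : ℂ) := by
    intro x
    have h := Complex.Gamma_mul_Gamma_one_sub (1 / 2 + (x : ℂ) * Complex.I)
    rw [show (1 : ℂ) - (1 / 2 + (x : ℂ) * Complex.I)
        = 1 / 2 - (x : ℂ) * Complex.I by ring] at h
    rw [show (Real.pi : ℂ) * (1 / 2 + (x : ℂ) * Complex.I)
        = (Real.pi : ℂ) / 2 + ((Real.pi * x : ℝ) : ℂ) * Complex.I by push_cast; ring,
      Complex.sin_add, Complex.sin_pi_div_two, Complex.cos_pi_div_two,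
      Complex.cos_mul_I] at h
    simp only [one_mul, zero_mul, add_zero, ← Complex.ofReal_cosh] at h
    exact h
  have hG : Gfun q ν * Gfun (-q) ν
      = ((Real.pi : ℂ) / (Real.cosh (Real.pi * (ν + q)) : ℂ))
        * ((Real.pi : ℂ) / (Real.cosh (Real.pi * (ν - q)) : ℂ)) := by
    unfold Gfun
    have e1 := hhalf (ν + q)
    have e2 := hhalf (ν - q)
    calc (Complex.Gamma (1 / 2 - Complex.I * ν - Complex.I * q) *
        Complex.Gamma (1 / 2 + Complex.I * ν - Complex.I * q)) *
        (Complex.Gamma (1 / 2 - Complex.I * ν - Complex.I * ((-q : ℝ) : ℂ)) *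
        Complex.Gamma (1 / 2 + Complex.I * ν - Complex.I * ((-q : ℝ) : ℂ)))
        = (Complex.Gamma (1 / 2 + (((ν + q : ℝ) : ℂ)) * Complex.I)
            * Complex.Gamma (1 / 2 - (((ν + q : ℝ) : ℂ)) * Complex.I))
          * (Complex.Gamma (1 / 2 + (((ν - q : ℝ) : ℂ)) * Complex.I)
            * Complex.Gamma (1 / 2 - (((ν - q : ℝ) : ℂ)) * Complex.I)) := by
          rw [show (1:ℂ)/2 - Complex.I * ν - Complex.I * q
              = 1/2 - ((ν + q : ℝ) : ℂ) * Complex.I by push_cast; ring,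
            show (1:ℂ)/2 + Complex.I * ν - Complex.I * ((-q : ℝ) : ℂ)
              = 1/2 + ((ν + q : ℝ) : ℂ) * Complex.I by push_cast; ring,
            show (1:ℂ)/2 + Complex.I * ν - Complex.I * q
              = 1/2 + ((ν - q : ℝ) : ℂ) * Complex.I by push_cast; ring,
            show (1:ℂ)/2 - Complex.I * ν - Complex.I * ((-q : ℝ) : ℂ)
              = 1/2 - ((ν - q : ℝ) : ℂ) * Complex.I by push_cast; ring]
          ring
      _ = ((Real.pi : ℂ) / (Real.cosh (Real.pi * (ν + q)) : ℂ))
          * ((Real.pi : ℂ) / (Real.cosh (Real.pi * (ν - q)) : ℂ)) := by rw [e1, e2]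
  have key : Real.sinh (Real.pi * q) ^ 2 + Real.cosh (Real.pi * ν) ^ 2
      + Real.cosh (Real.pi * (ν + q)) * Real.cosh (Real.pi * (ν - q))
      = Real.cosh (2 * Real.pi * q) + Real.cosh (2 * Real.pi * ν) := by
    rw [show Real.pi * (ν + q) = Real.pi * ν + Real.pi * q by ring,
      show Real.pi * (ν - q) = Real.pi * ν - Real.pi * q by ring,
      show 2 * Real.pi * q = 2 * (Real.pi * q) by ring,
      show 2 * Real.pi * ν = 2 * (Real.pi * ν) by ring,
      Real.cosh_add, Real.cosh_sub, Real.cosh_two_mul, Real.cosh_two_mul]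
    nlinarith [Real.cosh_sq_sub_sinh_sq (Real.pi * ν), Real.cosh_sq_sub_sinh_sq (Real.pi * q)]
  have keyC : ((Real.sinh (Real.pi * q) : ℂ)) ^ 2 + ((Real.cosh (Real.pi * ν) : ℂ)) ^ 2
      + (Real.cosh (Real.pi * (ν + q)) : ℂ) * (Real.cosh (Real.pi * (ν - q)) : ℂ)
      = (Real.cosh (2 * Real.pi * q) : ℂ) + (Real.cosh (2 * Real.pi * ν) : ℂ) := by
    exact_mod_cast key
  rw [hD, mul_assoc (Complex.sin ((Real.pi : ℂ) * (-(1 / 2) + Complex.I * ν)) ^ 2),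
    mul_assoc ((Real.pi : ℂ)), hAB, hsin2, hG]
  push_cast at hS hc1 hc2 keyC ⊢
  field_simp
  rw [show (Real.pi : ℂ) * q * 2 = 2 * Real.pi * q by ring,
    show (Real.pi : ℂ) * ν * 2 = 2 * Real.pi * ν by ring]
  exact keyC
end

section
/- For every real ν and every real q with q ≠ 0: (iπ/(2·sinh(πq)))·[(Γ(1/2+iν+iq)/Γ(1/2+iν−iq))·(iπ²·sinh(πν)/(q·sinh(πq)·G(−q,ν))) − cosh(πq)·(iπ·(sinh(2πq)+sinh(2πν))/(2q·sinh(πq)))] = π²·(cosh(2πq)+cosh(2πν))/(4q·sinh(πq)). -/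
open Complex

lemma trigid (s t : ℂ) : Complex.sinh t * Complex.cosh (t - s)
    - Complex.cosh s * (Complex.sinh (2*s) + Complex.sinh (2*t))/2
    + Complex.sinh s * (Complex.cosh (2*s) + Complex.cosh (2*t))/2 = 0 := by
  rw [Complex.sinh_two_mul, Complex.sinh_two_mul, Complex.cosh_two_mul,
    Complex.cosh_two_mul, Complex.cosh_sub]
  linear_combination (Complex.sinh s / 2) * (Complex.cosh_sq_sub_sinh_sq t)
    - (Complex.sinh s / 2) * (Complex.cosh_sq_sub_sinh_sq s)

lemma gamma_half_ne (w : ℂ) (hw : w.re = 0) : Complex.Gamma (1/2 + w) ≠ 0 := by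
  apply Complex.Gamma_ne_zero
  intro m h
  have h2 := congrArg Complex.re h
  simp [Complex.add_re, hw] at h2
  have hm : (0:ℝ) ≤ m := Nat.cast_nonneg m
  linarith

lemma aux2 (a b c S T ch q pi I : ℂ) (ha : a ≠ 0) (hb : b ≠ 0) (hc : c ≠ 0)
    (hS : S ≠ 0) (hq : q ≠ 0) (hch : ch ≠ 0)
    (hrefl : b * c = pi / ch) :
    a / b * (I * pi ^ 2 * T / (q * S * (c * a)))
      = I * pi * T * ch / (q * S) := by
  have hrefl' : b * c * ch = pi := by
    rw [hrefl]; field_simp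
  field_simp
  linear_combination (-(I * pi * T)) * hrefl'

lemma aux3 (S T ch C1 s2q s2t c2q c2t q pi : ℂ) (hS : S ≠ 0) (hq : q ≠ 0)
    (htr : T * ch - C1 * (s2q + s2t)/2 + S * (c2q + c2t)/2 = 0) :
    (Complex.I * pi / (2 * S)) * (Complex.I * pi * T * ch / (q * S)
      - C1 * (Complex.I * pi * (s2q + s2t) / (2 * q * S)))
      = pi ^ 2 * (c2q + c2t) / (4 * q * S) := by
  have hI := Complex.I_sq
  field_simp
  linear_combination (-8*pi^2) * htr
    + (4*pi^2*(2*T*ch - C1*(s2q+s2t))) * hI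


/-- δ(q−q') coefficient of `I₃` from the two coefficients of `I₂`:
`(iπ/(2 sinh πq))·[(Γ(1/2+iν+iq)/Γ(1/2+iν−iq))·(iπ² sinh πν /(q sinh πq · G(−q,ν)))
  − cosh(πq)·(iπ (sinh 2πq + sinh 2πν)/(2q sinh πq))]
  = π² (cosh 2πq + cosh 2πν)/(4 q sinh πq)`. -/
theorem I3_delta_minus_coefficient (ν q : ℝ) (hq : q ≠ 0) :
    (Complex.I * (Real.pi : ℂ) / (2 * (Real.sinh (Real.pi * q) : ℂ))) *
      ((Complex.Gamma (1 / 2 + Complex.I * ν + Complex.I * q)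
            / Complex.Gamma (1 / 2 + Complex.I * ν - Complex.I * q))
          * (Complex.I * (Real.pi : ℂ) ^ 2 * (Real.sinh (Real.pi * ν) : ℂ)
              / ((q : ℂ) * (Real.sinh (Real.pi * q) : ℂ) * Gfun (-q) ν))
        - (Real.cosh (Real.pi * q) : ℂ)
            * (Complex.I * (Real.pi : ℂ)
                * ((Real.sinh (2 * Real.pi * q) : ℂ) + (Real.sinh (2 * Real.pi * ν) : ℂ))
                / (2 * (q : ℂ) * (Real.sinh (Real.pi * q) : ℂ))))
      = (Real.pi : ℂ) ^ 2
          * ((Real.cosh (2 * Real.pi * q) : ℂ) + (Real.cosh (2 * Real.pi * ν) : ℂ))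
          / (4 * (q : ℂ) * (Real.sinh (Real.pi * q) : ℂ)) := by
  have hA : Complex.Gamma (1/2 + Complex.I * ν + Complex.I * q) ≠ 0 := by
    have := gamma_half_ne (Complex.I * ν + Complex.I * q) (by simp)
    simpa [add_assoc] using this
  have hB : Complex.Gamma (1/2 + Complex.I * ν - Complex.I * q) ≠ 0 := by
    have := gamma_half_ne (Complex.I * ν - Complex.I * q) (by simp)
    simpa [add_sub_assoc] using this
  have hC : Complex.Gamma (1/2 - Complex.I * ν + Complex.I * q) ≠ 0 := by
    have := gamma_half_ne (-(Complex.I * ν) + Complex.I * q) (by simp)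
    simpa [add_comm, sub_eq_add_neg, add_assoc] using this
  have hsin : Complex.sin ((Real.pi : ℂ) * (1/2 + Complex.I * ν - Complex.I * q))
      = Complex.cosh ((Real.pi : ℂ) * ((ν : ℂ) - q)) := by
    have h : (Real.pi : ℂ) * (1/2 + Complex.I * ν - Complex.I * q)
        = ((Real.pi/2 : ℝ) : ℂ) + ((Real.pi : ℂ) * ((ν : ℂ) - q)) * Complex.I := by
      push_cast; ring
    rw [h, Complex.sin_add, ← Complex.ofReal_sin, ← Complex.ofReal_cos,
      Real.sin_pi_div_two, Real.cos_pi_div_two, Complex.sin_mul_I, Complex.cos_mul_I]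
    push_cast; ring
  have hrefl := Complex.Gamma_mul_Gamma_one_sub (1/2 + Complex.I * ν - Complex.I * q)
  rw [hsin] at hrefl
  have h1z : (1 : ℂ) - (1/2 + Complex.I * ν - Complex.I * q)
      = 1/2 - Complex.I * ν + Complex.I * q := by ring
  rw [h1z] at hrefl
  have hcosh : Complex.cosh ((Real.pi : ℂ) * ((ν : ℂ) - q)) ≠ 0 := by
    have h : Complex.cosh ((Real.pi : ℂ) * ((ν : ℂ) - q))
        = ((Real.cosh (Real.pi * (ν - q)) : ℝ) : ℂ) := by
      rw [Complex.ofReal_cosh]; congr 1; push_cast; ring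
    rw [h]
    exact_mod_cast (Real.cosh_pos (x := Real.pi * (ν - q))).ne'
  have hG : Gfun (-q) ν = Complex.Gamma (1/2 - Complex.I * ν + Complex.I * q)
      * Complex.Gamma (1/2 + Complex.I * ν + Complex.I * q) := by
    unfold Gfun
    push_cast
    ring_nf
  have hS0 : Real.sinh (Real.pi * q) ≠ 0 :=
    fun h => (mul_ne_zero Real.pi_ne_zero hq) (Real.sinh_eq_zero.mp h)
  have hS : ((Real.sinh (Real.pi * q) : ℝ) : ℂ) ≠ 0 := Complex.ofReal_ne_zero.mpr hS0
  have hq' : (q : ℂ) ≠ 0 := Complex.ofReal_ne_zero.mpr hq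
  have key : Complex.Gamma (1 / 2 + Complex.I * ν + Complex.I * q)
            / Complex.Gamma (1 / 2 + Complex.I * ν - Complex.I * q)
          * (Complex.I * (Real.pi : ℂ) ^ 2 * (Real.sinh (Real.pi * ν) : ℂ)
              / ((q : ℂ) * (Real.sinh (Real.pi * q) : ℂ) * Gfun (-q) ν))
      = Complex.I * (Real.pi : ℂ) * (Real.sinh (Real.pi * ν) : ℂ)
          * Complex.cosh ((Real.pi : ℂ) * ((ν : ℂ) - q))
          / ((q : ℂ) * (Real.sinh (Real.pi * q) : ℂ)) := by
    rw [hG]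
    exact aux2 _ _ _ _ _ _ _ _ _ hA hB hC hS hq' hcosh hrefl
  rw [key]
  have e1 : ((Real.sinh (Real.pi * q) : ℝ) : ℂ) = Complex.sinh ((Real.pi : ℂ) * q) := by
    rw [Complex.ofReal_sinh]; congr 1; push_cast; ring
  have e2 : ((Real.sinh (Real.pi * ν) : ℝ) : ℂ) = Complex.sinh ((Real.pi : ℂ) * ν) := by
    rw [Complex.ofReal_sinh]; congr 1; push_cast; ring
  have e3 : ((Real.cosh (Real.pi * q) : ℝ) : ℂ) = Complex.cosh ((Real.pi : ℂ) * q) := by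
    rw [Complex.ofReal_cosh]; congr 1; push_cast; ring
  have e4 : ((Real.sinh (2 * Real.pi * q) : ℝ) : ℂ)
      = Complex.sinh (2 * ((Real.pi : ℂ) * q)) := by
    rw [Complex.ofReal_sinh]; congr 1; push_cast; ring
  have e5 : ((Real.sinh (2 * Real.pi * ν) : ℝ) : ℂ)
      = Complex.sinh (2 * ((Real.pi : ℂ) * ν)) := by
    rw [Complex.ofReal_sinh]; congr 1; push_cast; ring
  have e6 : ((Real.cosh (2 * Real.pi * q) : ℝ) : ℂ)
      = Complex.cosh (2 * ((Real.pi : ℂ) * q)) := by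
    rw [Complex.ofReal_cosh]; congr 1; push_cast; ring
  have e7 : ((Real.cosh (2 * Real.pi * ν) : ℝ) : ℂ)
      = Complex.cosh (2 * ((Real.pi : ℂ) * ν)) := by
    rw [Complex.ofReal_cosh]; congr 1; push_cast; ring
  have e8 : (Real.pi : ℂ) * ((ν : ℂ) - q) = (Real.pi : ℂ) * ν - (Real.pi : ℂ) * q := by
    ring
  rw [e1, e2, e3, e4, e5, e6, e7, e8]
  have hS' : Complex.sinh ((Real.pi : ℂ) * q) ≠ 0 := e1 ▸ hS
  exact aux3 _ _ _ _ _ _ _ _ _ _ hS' hq'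
    (trigid ((Real.pi : ℂ) * q) ((Real.pi : ℂ) * ν))
end
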